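/- Let F be a nonempty finite set of binary vectors of length n ≥ 1 (a finite set of functions from Fin n to Bool, representing a binary matrix with distinct rows). If the recursive algorithm A₁ applied to F returns true, then F contains at least one heavy column, i.e., there exists a column index k with 2 · |{r ∈ F : r k = true}| ≥ |F|. -/

import Mathlib

/-- The reduction `F_k^{b−}`: take all rows `r ∈ F` with `r k = b` and delete
coordinate `k`. Deletion is injective on such rows since they all agree at
position `k`. -/
def reduceMat {n : ℕ} (k : Fin (n + 1)) (b : Bool)
    (F : Finset (Fin (n + 1) → Bool)) : Finset (Fin n → Bool) :=
  (F.filter (fun r => r k = b)).image (fun r => fun i => r (k.succAbove i))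

/-- Every column of `K` has strictly more zeros than ones. -/
def allColsMoreZeros {n : ℕ} (K : Finset (Fin n → Bool)) : Prop :=
  ∀ j : Fin n, 2 * (K.filter (fun r => r j = true)).card < K.card

instance {n : ℕ} (K : Finset (Fin n → Bool)) : Decidable (allColsMoreZeros K) := by
  unfold allColsMoreZeros; infer_instance

/-- Algorithm `A₁` on a matrix with `n + 1` columns, given as a finite set of
distinct rows. For `n + 1 = 1` columns it returns `true` iff the single column
is heavy. Otherwise it returns `true` iff for every column `k` and every
nonempty reduction `K ∈ S_k = {F_k^{0−}, F_k^{1−}}`, it is not the case that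
every column of `K` has strictly more zeros than ones (which would make the
algorithm return `false`), and the recursive call `A₁ K` returns `true`
(any `false` from a recursive call is propagated). The order of processing
does not affect the returned value, since `true` is only returned after all
columns are processed. -/
def A1 : (n : ℕ) → Finset (Fin (n + 1) → Bool) → Bool
  | 0, F => decide (F.card ≤ 2 * (F.filter (fun r => r 0 = true)).card)
  | n + 1, F =>
      decide (∀ k : Fin (n + 2), ∀ b : Bool, (reduceMat k b F).Nonempty →
        ¬ allColsMoreZeros (reduceMat k b F) ∧ A1 n (reduceMat k b F) = true)

lemma flip_mem : ∀ (n : ℕ) (F : Finset (Fin (n + 1) → Bool)), A1 n F = true →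
    ∀ r ∈ F, ∀ j : Fin (n + 1), r j = false → Function.update r j true ∈ F := by
  intro n
  induction n with
  | zero =>
    intro F hA r hr j hj
    simp only [A1, decide_eq_true_eq] at hA
    by_contra hmem
    have hfilter : F.filter (fun r => r 0 = true) = ∅ := by
      rw [Finset.filter_eq_empty_iff]
      intro s hs hs0
      apply hmem
      have hsj : s = Function.update r j true := by
        funext i
        have hij : i = j := Fin.ext ((Nat.lt_one_iff.mp i.isLt).trans
          (Nat.lt_one_iff.mp j.isLt).symm)
        subst hij
        rw [Function.update_self]
        have h0 : (0 : Fin (0 + 1)) = i :=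
          Fin.ext (Nat.lt_one_iff.mp i.isLt).symm
        rw [h0] at hs0
        exact hs0
      rw [← hsj]; exact hs
    have h1 : 0 < F.card := Finset.card_pos.mpr ⟨r, hr⟩
    rw [hfilter] at hA
    simp only [Finset.card_empty, Nat.mul_zero, Nat.le_zero] at hA
    omega
  | succ n ih =>
    intro F hA r hr j hj
    simp only [A1, decide_eq_true_eq] at hA
    obtain ⟨k, hkj⟩ : ∃ k : Fin (n + 2), k ≠ j := exists_ne j
    obtain ⟨j', hj'⟩ := Fin.exists_succAbove_eq (Ne.symm hkj)
    have hrK : (fun i => r (k.succAbove i)) ∈ reduceMat k (r k) F := by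
      apply Finset.mem_image_of_mem
      simp [Finset.mem_filter, hr]
    obtain ⟨-, hA1⟩ := hA k (r k) ⟨_, hrK⟩
    have hupd := ih (reduceMat k (r k) F) hA1 _ hrK j'
      (by show r (k.succAbove j') = false; rw [hj']; exact hj)
    rw [reduceMat, Finset.mem_image] at hupd
    obtain ⟨s, hsF, hs⟩ := hupd
    rw [Finset.mem_filter] at hsF
    have hse : Function.update r j true = s := by
      funext i
      rcases eq_or_ne i k with rfl | hik
      · rw [Function.update_of_ne hkj, hsF.2]
      · obtain ⟨i', rfl⟩ := Fin.exists_succAbove_eq hik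
        have hci := congrFun hs i'
        rcases eq_or_ne i' j' with rfl | hij'
        · rw [Function.update_self] at hci
          rw [hj'] at hci ⊢
          rw [Function.update_self, hci]
        · rw [Function.update_of_ne hij'] at hci
          have hne2 : k.succAbove i' ≠ j := by
            rw [← hj']
            exact (Fin.succAbove_right_injective (p := k)).ne hij'
          rw [Function.update_of_ne hne2, hci]
    rw [hse]; exact hsF.1

/-- Theorem 1: if `F` is a nonempty finite set of distinct
binary vectors of length `n + 1 ≥ 1` and algorithm `A₁` returns `true` on `F`,
then `F` has a heavy column: some `k` with `2 * |{r ∈ F : r k = true}| ≥ |F|`. -/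
theorem stmt_6 {n : ℕ} (F : Finset (Fin (n + 1) → Bool)) (hne : F.Nonempty)
    (h : A1 n F = true) :
    ∃ k : Fin (n + 1), F.card ≤ 2 * (F.filter (fun r => r k = true)).card := by
  classical
  refine ⟨0, ?_⟩
  have hcard : (F.filter (fun r => r 0 = true)).card +
      (F.filter (fun r => ¬ (r 0 = true))).card = F.card :=
    Finset.card_filter_add_card_filter_not _
  have hle : (F.filter (fun r => ¬ (r 0 = true))).card ≤
      (F.filter (fun r => r 0 = true)).card := by
    apply Finset.card_le_card_of_injOn (fun r => Function.update r 0 true)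
    · intro a ha
      rw [Finset.mem_coe, Finset.mem_filter] at ha ⊢
      refine ⟨flip_mem n F h a ha.1 0 ?_, Function.update_self _ _ _⟩
      simpa using ha.2
    · intro a ha b hb hab
      rw [Finset.mem_coe, Finset.mem_filter] at ha hb
      funext i
      rcases eq_or_ne i 0 with rfl | hi
      · have ha0 : a 0 = false := by simpa using ha.2
        have hb0 : b 0 = false := by simpa using hb.2
        rw [ha0, hb0]
      · have := congrFun hab i
        simpa [Function.update_of_ne hi] using this
  rw [← hcard, Nat.two_mul]
  exact Nat.add_le_add_left hle _
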